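/- Let X ∈ ℝ^{n×d} with XXᵀ invertible, let w₀ ∈ ℝ^d, let 𝟙 ∈ ℝ^n be the all-ones vector, and define w' := Xᵀ(XXᵀ)⁻¹(𝟙 − Xw₀) + w₀. Let L(w) := (1/n) Σ_{j=1}^n (1 − ⟨w, xⱼ⟩)² and let (w_t) be the gradient descent iterates w_{t+1} := w_t − α ∇L(w_t) from w₀. If the step size satisfies 0 < α < n / λ_max(XXᵀ), where λ_max(XXᵀ) is the largest eigenvalue of XXᵀ, then w_t → w' as t → ∞. -/

import Mathlib

open Matrix Filter

/-- For gradient descent on the empirical square loss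
`L(w) = (1/n) Σⱼ (1 − ⟨w, xⱼ⟩)²` (with `∇L(w) = (2/n) Xᵀ (X w − 𝟙)`), if `X Xᵀ` is
invertible and the step size satisfies `0 < α < n / λ_max(X Xᵀ)` (where `λ_max` is the
largest element of the spectrum of `X Xᵀ`), then the iterates started at `w₀` converge to
`w' = Xᵀ (X Xᵀ)⁻¹ (𝟙 − X w₀) + w₀`. -/
theorem stmt_9 {n d : ℕ} (X : Matrix (Fin n) (Fin d) ℝ) (hX : IsUnit (X * Xᵀ))
    (w₀ : Fin d → ℝ) (α : ℝ) (hα : 0 < α)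
    (hα2 : α < (n : ℝ) / sSup (spectrum ℝ (X * Xᵀ)))
    (w : ℕ → Fin d → ℝ) (hw0 : w 0 = w₀)
    (hGD : ∀ t, w (t + 1) =
      w t - α • (((2 : ℝ) / n) • (Xᵀ *ᵥ (X *ᵥ w t - 1)))) :
    Tendsto w atTop
      (nhds (Xᵀ *ᵥ ((X * Xᵀ)⁻¹ *ᵥ ((1 : Fin n → ℝ) - X *ᵥ w₀)) + w₀)) := by
  rcases Nat.eq_zero_or_pos n with hn | hn
  · subst hn
    simp only [Nat.cast_zero, zero_div] at hα2
    exact absurd hα2 (not_lt.2 hα.le)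
  set A : Matrix (Fin n) (Fin n) ℝ := X * Xᵀ with hA_def
  have hA : A.IsHermitian := by
    have := Matrix.isHermitian_mul_conjTranspose_self X
    rwa [Matrix.conjTranspose_eq_transpose_of_trivial] at this
  have hPSD : A.PosSemidef := by
    have := Matrix.posSemidef_self_mul_conjTranspose X
    rwa [Matrix.conjTranspose_eq_transpose_of_trivial] at this
  have hdetU : IsUnit A.det := (Matrix.isUnit_iff_isUnit_det A).1 hX
  have hdet : A.det ≠ 0 := hdetU.ne_zero
  have hev_ne : ∀ i, hA.eigenvalues i ≠ 0 := by
    intro i hi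
    apply hdet
    rw [hA.det_eq_prod_eigenvalues]
    exact Finset.prod_eq_zero (Finset.mem_univ i) (by simpa using hi)
  have hev_pos : ∀ i, 0 < hA.eigenvalues i :=
    fun i => lt_of_le_of_ne (hPSD.eigenvalues_nonneg i) (Ne.symm (hev_ne i))
  have hspec : spectrum ℝ A = Set.range hA.eigenvalues := hA.spectrum_real_eq_range_eigenvalues
  set S := sSup (spectrum ℝ A) with hS_def
  have hle : ∀ i, hA.eigenvalues i ≤ S := by
    intro i
    rw [hS_def, hspec]
    exact le_csSup (Set.finite_range _).bddAbove ⟨i, rfl⟩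
  obtain ⟨i0⟩ : Nonempty (Fin n) := ⟨⟨0, hn⟩⟩
  have hSpos : 0 < S := lt_of_lt_of_le (hev_pos i0) (hle i0)
  have hαS : α * S < n := by
    rw [lt_div_iff₀ hSpos] at hα2
    exact hα2
  set c : ℝ := 2 * α / n with hc_def
  have hc_pos : 0 < c := by positivity
  have hμ : ∀ i, |1 - c * hA.eigenvalues i| < 1 := by
    intro i
    rw [abs_lt]
    constructor
    · have h1 : c * hA.eigenvalues i ≤ c * S :=
        mul_le_mul_of_nonneg_left (hle i) hc_pos.le
      have h2 : c * S < 2 := by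
        rw [hc_def, div_mul_eq_mul_div, div_lt_iff₀ (by exact_mod_cast hn)]
        nlinarith
      linarith
    · have : 0 < c * hA.eigenvalues i := mul_pos hc_pos (hev_pos i)
      linarith
  set w' : Fin d → ℝ := Xᵀ *ᵥ (A⁻¹ *ᵥ ((1 : Fin n → ℝ) - X *ᵥ w₀)) + w₀ with hw'_def
  have hAinv : ∀ z : Fin n → ℝ, A *ᵥ (A⁻¹ *ᵥ z) = z := by
    intro z
    rw [Matrix.mulVec_mulVec, Matrix.mul_nonsing_inv _ hdetU, Matrix.one_mulVec]
  have hXw' : X *ᵥ w' = 1 := by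
    rw [hw'_def, Matrix.mulVec_add,
      Matrix.mulVec_mulVec (A⁻¹ *ᵥ ((1 : Fin n → ℝ) - X *ᵥ w₀)) X Xᵀ, ← hA_def, hAinv]
    simp
  set v : Fin n → ℝ := -(A⁻¹ *ᵥ ((1 : Fin n → ℝ) - X *ᵥ w₀)) with hv_def
  set N : Matrix (Fin n) (Fin n) ℝ := 1 - c • A with hN_def
  have hclosed : ∀ t, w t = Xᵀ *ᵥ (N ^ t *ᵥ v) + w' := by
    intro t
    induction t with
    | zero =>
      rw [hw0, pow_zero, Matrix.one_mulVec, hv_def, Matrix.mulVec_neg, hw'_def]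
      abel
    | succ t ih =>
      have hXwt : X *ᵥ w t - 1 = A *ᵥ (N ^ t *ᵥ v) := by
        rw [ih, Matrix.mulVec_add, hXw', Matrix.mulVec_mulVec (N ^ t *ᵥ v) X Xᵀ, ← hA_def]
        abel
      rw [hGD t, hXwt, ih, smul_smul]
      have hcoef : α * (2 / n) = c := by rw [hc_def]; ring
      rw [hcoef]
      have hstep : Xᵀ *ᵥ (N ^ (t + 1) *ᵥ v) =
          Xᵀ *ᵥ (N ^ t *ᵥ v) - c • (Xᵀ *ᵥ (A *ᵥ (N ^ t *ᵥ v))) := by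
        rw [pow_succ', ← Matrix.mulVec_mulVec v N (N ^ t), hN_def,
          Matrix.sub_mulVec, Matrix.one_mulVec, Matrix.smul_mulVec,
          Matrix.mulVec_sub, Matrix.mulVec_smul]
      rw [hstep, ← Matrix.mulVec_smul]
      abel
  -- spectral decomposition of v and powers of N
  have hvdecomp : v = ∑ i, hA.eigenvectorBasis.repr (WithLp.toLp 2 v) i • ⇑(hA.eigenvectorBasis i) :=
    by
    have := congrArg WithLp.ofLp (hA.eigenvectorBasis.sum_repr (WithLp.toLp 2 v))
    rw [WithLp.ofLp_sum] at this
    simpa using this.symm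
  have hNb : ∀ (t : ℕ) i, N ^ t *ᵥ ⇑(hA.eigenvectorBasis i) =
      (1 - c * hA.eigenvalues i) ^ t • ⇑(hA.eigenvectorBasis i) := by
    intro t i
    induction t with
    | zero => simp [Matrix.one_mulVec]
    | succ t ih =>
      have h1 : N *ᵥ ⇑(hA.eigenvectorBasis i) =
          (1 - c * hA.eigenvalues i) • ⇑(hA.eigenvectorBasis i) := by
        rw [hN_def, Matrix.sub_mulVec, Matrix.one_mulVec, Matrix.smul_mulVec,
          hA.mulVec_eigenvectorBasis, sub_smul, one_smul, smul_smul]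
      rw [pow_succ', ← Matrix.mulVec_mulVec (⇑(hA.eigenvectorBasis i)) N (N ^ t), ih,
        Matrix.mulVec_smul, h1, smul_smul, ← pow_succ]
  have hNv : ∀ t, N ^ t *ᵥ v =
      ∑ i, (hA.eigenvectorBasis.repr (WithLp.toLp 2 v) i * (1 - c * hA.eigenvalues i) ^ t) •
        ⇑(hA.eigenvectorBasis i) := by
    intro t
    conv_lhs => rw [hvdecomp]
    rw [show (N ^ t *ᵥ ∑ i, hA.eigenvectorBasis.repr (WithLp.toLp 2 v) i • ⇑(hA.eigenvectorBasis i)) =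
        (N ^ t).mulVecLin (∑ i, hA.eigenvectorBasis.repr (WithLp.toLp 2 v) i • ⇑(hA.eigenvectorBasis i))
        from rfl, map_sum]
    refine Finset.sum_congr rfl fun i _ => ?_
    rw [_root_.map_smul, Matrix.mulVecLin_apply, hNb, smul_smul]
  have hTend0 : Tendsto (fun t => N ^ t *ᵥ v) atTop (nhds 0) := by
    simp only [hNv]
    have h0 : (0 : Fin n → ℝ) = ∑ _i : Fin n, (0 : Fin n → ℝ) := by simp
    rw [h0]
    apply tendsto_finset_sum
    intro i _
    have h1 : Tendsto (fun t : ℕ =>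
        hA.eigenvectorBasis.repr (WithLp.toLp 2 v) i * (1 - c * hA.eigenvalues i) ^ t) atTop (nhds 0) := by
      have := tendsto_pow_atTop_nhds_zero_of_abs_lt_one (hμ i)
      simpa using this.const_mul (hA.eigenvectorBasis.repr (WithLp.toLp 2 v) i)
    have := h1.smul_const (⇑(hA.eigenvectorBasis i) : Fin n → ℝ)
    simpa using this
  have hcont : Continuous fun u : Fin n → ℝ => Xᵀ *ᵥ u + w' :=
    ((Matrix.mulVecLin Xᵀ).continuous_of_finiteDimensional).add continuous_const
  have hfinal : Tendsto w atTop (nhds (Xᵀ *ᵥ (0 : Fin n → ℝ) + w')) := by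
    have := (hcont.tendsto 0).comp hTend0
    convert this using 1
    funext t
    exact hclosed t
  rw [Matrix.mulVec_zero, zero_add] at hfinal
  exact hfinal
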